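/- For 0 < y ≤ 1 and ρ ≥ 1, the difference β(ρ sinh y) - β(ρ y) equals ρ⁻² x³ b(x/ρ) ∫₀¹ β′(x + ρ⁻² x³ b(x/ρ) t) dt, where x = ρ y and b is the smooth function with sinh(s) = s + s³ b(s); consequently |β(ρ sinh y) - β(ρ y)| ≤ C ρ⁻² sup_{z ≥ ρ y} |β′(z)| (1+|z|)³. -/

import Mathlib

lemma sinh_sub_le {y : ℝ} (h0 : 0 ≤ y) (h1 : y ≤ 1) : Real.sinh y ≤ y + y ^ 3 := by
  have hy : |y| = y := abs_of_nonneg h0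
  have hp := Real.exp_bound (x := y) (by rw [hy]; exact h1) (n := 3) (by norm_num)
  have hn := Real.exp_bound (x := -y) (by rw [abs_neg, hy]; exact h1) (n := 3) (by norm_num)
  simp only [Finset.sum_range_succ, Finset.sum_range_zero] at hp hn
  rw [abs_le] at hp hn
  rw [abs_neg, hy] at hn
  rw [hy] at hp
  rw [Real.sinh_eq]
  norm_num [Nat.factorial] at hp hn
  nlinarith [hp.2, hn.1]

lemma ftc_step (f : ℝ → ℝ) (hf : ContDiff ℝ 1 f) (a h : ℝ) (hh : h ≠ 0) :
    f (a + h) - f a = h * ∫ t in (0:ℝ)..1, deriv f (a + h * t) := by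
  have hc : Continuous (deriv f) := hf.continuous_deriv le_rfl
  rw [intervalIntegral.integral_comp_add_mul (deriv f) hh a]
  rw [intervalIntegral.integral_deriv_eq_sub (fun x _ => (hf.differentiable one_ne_zero).differentiableAt)
    (hc.intervalIntegrable _ _)]
  simp [smul_eq_mul]
  field_simp

/-- For `0 < y ≤ 1` and `ρ ≥ 1`, with `x = ρ y` and `b(s) = (sinh s - s)/s³` (b(0)=1/6),
`β(ρ sinh y) - β(ρ y) = ρ⁻² x³ b(x/ρ) ∫₀¹ β′(x + ρ⁻² x³ b(x/ρ) t) dt`, and consequently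
`|β(ρ sinh y) - β(ρ y)| ≤ C ρ⁻² sup_{z ≥ ρ y} |β′(z)| (1+|z|)³`. -/
theorem stmt3 (β : ℝ → ℝ) (hβ : ContDiff ℝ 1 β)
    (hdecay : ∀ n : ℕ, ∃ M : ℝ, ∀ z : ℝ, |deriv β z| * (1 + |z|) ^ n ≤ M)
    (b : ℝ → ℝ) (hb : ∀ s : ℝ, s ≠ 0 → b s = (Real.sinh s - s) / s ^ 3)
    (hb0 : b 0 = 1 / 6) :
    ∃ C : ℝ, 0 < C ∧ ∀ ρ : ℝ, 1 ≤ ρ → ∀ y : ℝ, 0 < y → y ≤ 1 →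
      (β (ρ * Real.sinh y) - β (ρ * y)
          = ρ⁻¹ ^ 2 * (ρ * y) ^ 3 * b (ρ * y / ρ) *
            ∫ t in (0 : ℝ)..1,
              deriv β (ρ * y + ρ⁻¹ ^ 2 * (ρ * y) ^ 3 * b (ρ * y / ρ) * t)) ∧
        |β (ρ * Real.sinh y) - β (ρ * y)|
          ≤ C * ρ⁻¹ ^ 2 * ⨆ z ∈ {z : ℝ | ρ * y ≤ z}, |deriv β z| * (1 + |z|) ^ 3 := by
  refine ⟨1, one_pos, fun ρ hρ y hy0 hy1 => ?_⟩
  have hρ0 : (0:ℝ) < ρ := lt_of_lt_of_le one_pos hρ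
  have hy0' : y ≠ 0 := ne_of_gt hy0
  have hby : b (ρ * y / ρ) = (Real.sinh y - y) / y ^ 3 := by
    rw [mul_comm, mul_div_assoc, div_self hρ0.ne', mul_one]
    exact hb y hy0'
  set K := ρ⁻¹ ^ 2 * (ρ * y) ^ 3 * b (ρ * y / ρ) with hK
  have hKval : K = ρ * Real.sinh y - ρ * y := by
    rw [hK, hby]; field_simp
  have hsinh : y < Real.sinh y := Real.self_lt_sinh_iff.mpr hy0
  have hKpos : 0 < K := by rw [hKval]; nlinarith
  have heq : β (ρ * Real.sinh y) - β (ρ * y)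
      = K * ∫ t in (0:ℝ)..1, deriv β (ρ * y + K * t) := by
    have h2 : ρ * Real.sinh y = ρ * y + K := by rw [hKval]; ring
    rw [h2]
    exact ftc_step β hβ (ρ * y) K hKpos.ne'
  refine ⟨heq, ?_⟩
  obtain ⟨M, hM⟩ := hdecay 3
  have hM0 : 0 ≤ M := le_trans (by positivity) (hM 0)
  set S := ⨆ z ∈ {z : ℝ | ρ * y ≤ z}, |deriv β z| * (1 + |z|) ^ 3 with hS
  set g : ℝ → ℝ := fun z => ⨆ _ : z ∈ {z : ℝ | ρ * y ≤ z}, |deriv β z| * (1 + |z|) ^ 3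
    with hg
  have hgle : ∀ z, g z ≤ M := by
    intro z
    by_cases hz : z ∈ {z : ℝ | ρ * y ≤ z}
    · rw [hg]; simp only; rw [ciSup_pos hz]; exact hM z
    · haveI : IsEmpty (z ∈ {z : ℝ | ρ * y ≤ z}) := ⟨fun h => hz h⟩
      rw [hg]; simp only; rw [Real.iSup_of_isEmpty]; exact hM0
  have hbdd : BddAbove (Set.range g) := ⟨M, by rintro _ ⟨z, rfl⟩; exact hgle z⟩
  have hfleS : ∀ z, ρ * y ≤ z → |deriv β z| * (1 + |z|) ^ 3 ≤ S := by
    intro z hz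
    have h1 : g z = |deriv β z| * (1 + |z|) ^ 3 := by
      rw [hg]; simp only; exact ciSup_pos hz
    rw [← h1]
    exact le_ciSup hbdd z
  have hxpos : 0 < ρ * y := mul_pos hρ0 hy0
  have hS0 : 0 ≤ S :=
    le_trans (by positivity) (hfleS (ρ * y) le_rfl)
  have hibound : ∀ t ∈ Set.uIoc (0:ℝ) 1,
      ‖deriv β (ρ * y + K * t)‖ ≤ S / (1 + ρ * y) ^ 3 := by
    intro t ht
    rw [Set.uIoc_of_le zero_le_one] at ht
    set z := ρ * y + K * t with hz
    have hzge : ρ * y ≤ z := le_add_of_nonneg_right (mul_nonneg hKpos.le ht.1.le)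
    have hz0 : 0 < z := lt_of_lt_of_le hxpos hzge
    have habs : |z| = z := abs_of_pos hz0
    rw [Real.norm_eq_abs, le_div_iff₀ (by positivity)]
    calc |deriv β z| * (1 + ρ * y) ^ 3
        ≤ |deriv β z| * (1 + |z|) ^ 3 := by
          apply mul_le_mul_of_nonneg_left _ (abs_nonneg _)
          apply pow_le_pow_left₀ (by positivity)
          rw [habs]; linarith
      _ ≤ S := hfleS z hzge
  have hIle : |∫ t in (0:ℝ)..1, deriv β (ρ * y + K * t)| ≤ S / (1 + ρ * y) ^ 3 := by
    have := intervalIntegral.norm_integral_le_of_norm_le_const hibound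
    simpa using this
  have hKle : K ≤ ρ * y ^ 3 := by
    rw [hKval]
    have := sinh_sub_le hy0.le hy1
    nlinarith
  rw [heq, abs_mul, abs_of_pos hKpos]
  have step1 : K * |∫ t in (0:ℝ)..1, deriv β (ρ * y + K * t)|
      ≤ K * (S / (1 + ρ * y) ^ 3) := mul_le_mul_of_nonneg_left hIle hKpos.le
  refine step1.trans ?_
  rw [one_mul]
  have hident : ρ⁻¹ ^ 2 * (ρ * y) ^ 3 = ρ * y ^ 3 := by
    field_simp
  have hKdiv : K / (1 + ρ * y) ^ 3 ≤ ρ⁻¹ ^ 2 := by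
    rw [div_le_iff₀ (by positivity)]
    have h1 : (ρ * y) ^ 3 ≤ (1 + ρ * y) ^ 3 := by
      apply pow_le_pow_left₀ (by positivity); linarith
    have h2 : ρ⁻¹ ^ 2 * (ρ * y) ^ 3 ≤ ρ⁻¹ ^ 2 * (1 + ρ * y) ^ 3 :=
      mul_le_mul_of_nonneg_left h1 (by positivity)
    rw [hident] at h2
    linarith
  calc K * (S / (1 + ρ * y) ^ 3) = K / (1 + ρ * y) ^ 3 * S := by ring
    _ ≤ ρ⁻¹ ^ 2 * S := mul_le_mul_of_nonneg_right hKdiv hS0
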